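/- arXiv:2311.02582 — 2 statements merged into one kernel-verified Lean document; each statement's English description precedes it below -/
import Mathlib

section
/- Dorfman's procedure bound: for E items with f defectives (1 ≤ f ≤ E), partitioning into ⌈√(Ef)⌉ groups each of size at most ⌈√(E/f)⌉ and testing each group, then individually testing all members of positive groups, uses at most √(Ef) + f·√(E/f) = 2√(Ef) tests (as real numbers, up to ceiling corrections: the test count is at most ⌈√(Ef)⌉ + f·⌈√(E/f)⌉). -/
/-- Dorfman's procedure bound: with `E` items and `f` defectives (`1 ≤ f ≤ E`),
partitioning into `⌈√(Ef)⌉` pairwise disjoint groups of size at most `⌈√(E/f)⌉`,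
testing every group and then individually testing all members of positive groups
uses at most `⌈√(Ef)⌉ + f * ⌈√(E/f)⌉` tests. -/
theorem dorfman_test_count_bound (E f : ℕ) (hf : 1 ≤ f) (hfE : f ≤ E)
    (D : Finset (Fin E)) (hD : D.card = f)
    (groups : Fin (⌈Real.sqrt ((E : ℝ) * f)⌉₊) → Finset (Fin E))
    (hdisj : ∀ i j, i ≠ j → Disjoint (groups i) (groups j))
    (hsize : ∀ i, (groups i).card ≤ ⌈Real.sqrt ((E : ℝ) / f)⌉₊) :
    ⌈Real.sqrt ((E : ℝ) * f)⌉₊ +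
        ∑ i ∈ Finset.univ.filter (fun i => ((groups i) ∩ D).Nonempty), (groups i).card ≤
      ⌈Real.sqrt ((E : ℝ) * f)⌉₊ + f * ⌈Real.sqrt ((E : ℝ) / f)⌉₊ := by
  set P := Finset.univ.filter (fun i => ((groups i) ∩ D).Nonempty) with hP
  have hcard : P.card ≤ f := by
    classical
    have : Nonempty (Fin E) := ⟨⟨0, by omega⟩⟩
    choose pick hpick using fun i (h : i ∈ P) =>
      (Finset.mem_filter.mp h).2
    have : P.card ≤ D.card := by
      apply Finset.card_le_card_of_injOn (fun i => if h : i ∈ P then pick i h else Classical.arbitrary _)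
      · intro i hi
        simp only [Finset.mem_coe] at hi ⊢
        simp only [dif_pos hi]
        exact (Finset.mem_inter.mp (hpick i hi)).2
      · intro i hi j hj hij
        simp only [Finset.mem_coe] at hi hj
        simp only [dif_pos hi, dif_pos hj] at hij
        by_contra hne
        have h1 := (Finset.mem_inter.mp (hpick i hi)).1
        have h2 := (Finset.mem_inter.mp (hpick j hj)).1
        rw [hij] at h1
        exact absurd ((hdisj i j hne).le_bot (Finset.mem_inter.mpr ⟨h1, h2⟩)) (Finset.notMem_empty _)
    omega
  have hsum : ∑ i ∈ P, (groups i).card ≤ f * ⌈Real.sqrt ((E : ℝ) / f)⌉₊ :=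
    calc ∑ i ∈ P, (groups i).card ≤ P.card * ⌈Real.sqrt ((E : ℝ) / f)⌉₊ :=
          Finset.sum_le_card_nsmul P _ _ (fun i _ => hsize i)
      _ ≤ f * ⌈Real.sqrt ((E : ℝ) / f)⌉₊ := Nat.mul_le_mul_right _ hcard
  omega
end

section
/- If an (m+1)×b matrix C satisfies C = U·B for U the first m columns of a Vandermonde matrix V on distinct nodes, and additionally a perturbed matrix C' = C + E has last-row test S_{m+1}·C' = 0 where S = V^{-1}, then S_{m+1}·E = 0; in particular if E has exactly one nonzero row then the test detects it (S_{m+1}·C' ≠ 0), since every entry of the last row of S is nonzero. -/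
open Matrix Finset

/-- Every entry of the last row of the inverse Vandermonde matrix is nonzero. -/
lemma vand_inv_last_row_ne_zero {F : Type*} [Field F] {m : ℕ}
    (x : Fin (m + 1) → F) (hx : Function.Injective x) (i : Fin (m + 1)) :
    (Matrix.vandermonde x)⁻¹ (Fin.last m) i ≠ 0 := by
  have hdet : (Matrix.vandermonde x).det ≠ 0 := Matrix.det_vandermonde_ne_zero_iff.mpr hx
  have hmul : (Matrix.vandermonde x)⁻¹ * Matrix.vandermonde x = 1 :=
    Matrix.nonsing_inv_mul _ (isUnit_iff_ne_zero.mpr hdet)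
  set r : Fin (m + 1) → F := (Matrix.vandermonde x)⁻¹ (Fin.last m) with hr
  have hrow : ∀ k : Fin (m + 1), (∑ i', r i' * x i' ^ (k : ℕ)) =
      (1 : Matrix (Fin (m + 1)) (Fin (m + 1)) F) (Fin.last m) k := by
    intro k
    have := congrFun (congrFun hmul (Fin.last m)) k
    simpa [Matrix.mul_apply, Matrix.vandermonde_apply, hr] using this
  intro h0
  -- Restrict to the other m points
  have hxs : Function.Injective (x ∘ i.succAbove) :=
    hx.comp (Fin.succAbove_right_injective)
  have hzero : (fun j : Fin m => r (i.succAbove j)) = 0 := by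
    apply Matrix.eq_zero_of_forall_pow_sum_mul_pow_eq_zero hxs
    intro k
    have hk := hrow (Fin.castSucc k)
    rw [Fin.sum_univ_succAbove _ i, h0, zero_mul, zero_add] at hk
    have hne : Fin.last m ≠ Fin.castSucc k := (Fin.castSucc_lt_last k).ne'
    simpa [Matrix.one_apply, hne] using hk
  have hall : ∀ i', r i' = 0 := by
    intro i'
    rcases eq_or_ne i' i with rfl | hne
    · exact h0
    · obtain ⟨j, rfl⟩ := Fin.exists_succAbove_eq hne
      exact congrFun hzero j
  have := hrow (Fin.last m)
  simp only [Matrix.one_apply_eq] at this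
  rw [Finset.sum_eq_zero (fun i' _ => by rw [hall i', zero_mul])] at this
  exact zero_ne_one this

/-- Detection of a single perturbed row: with `C = U ⬝ B` the honest encoding (`U` the
first `m` columns of the Vandermonde matrix `V`, `S = V⁻¹`), and `E` an error matrix
with exactly one nonzero row, if the last-row test on `C + E` passes then the last row
of `S ⬝ E` is zero; and in fact the test detects the error: `S_{m+1} ⬝ (C + E) ≠ 0`. -/
theorem testable_code_detects_single_row_error {F : Type*} [Field F] {m b : ℕ}
    (x : Fin (m + 1) → F) (hx : Function.Injective x)
    (S : Matrix (Fin (m + 1)) (Fin (m + 1)) F) (hS : S = (Matrix.vandermonde x)⁻¹)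
    (U : Matrix (Fin (m + 1)) (Fin m) F) (hU : ∀ i j, U i j = x i ^ (j : ℕ))
    (B : Matrix (Fin m) (Fin b) F)
    (C : Matrix (Fin (m + 1)) (Fin b) F) (hC : C = U * B)
    (E : Matrix (Fin (m + 1)) (Fin b) F) (hE : ∃! i, E i ≠ 0) :
    ((∀ j, (S * (C + E)) (Fin.last m) j = 0) → ∀ j, (S * E) (Fin.last m) j = 0) ∧
      (S * (C + E)) (Fin.last m) ≠ 0 := by
  have hdet : (Matrix.vandermonde x).det ≠ 0 := Matrix.det_vandermonde_ne_zero_iff.mpr hx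
  have hmul : S * Matrix.vandermonde x = 1 := by
    rw [hS]; exact Matrix.nonsing_inv_mul _ (isUnit_iff_ne_zero.mpr hdet)
  -- last row of S * U is zero
  have hSU : ∀ k : Fin m, (S * U) (Fin.last m) k = 0 := by
    intro k
    have := congrFun (congrFun hmul (Fin.last m)) (Fin.castSucc k)
    have hne : Fin.last m ≠ Fin.castSucc k := (Fin.castSucc_lt_last k).ne'
    simp only [Matrix.mul_apply, Matrix.vandermonde, Matrix.one_apply, hne,
      if_false, Matrix.of_apply] at this
    simp only [Matrix.mul_apply, hU]
    simpa using this
  have hSC : ∀ j, (S * C) (Fin.last m) j = 0 := by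
    intro j
    rw [hC, ← Matrix.mul_assoc, Matrix.mul_apply]
    exact Finset.sum_eq_zero fun k _ => by rw [hSU k, zero_mul]
  have key : ∀ j, (S * (C + E)) (Fin.last m) j = (S * E) (Fin.last m) j := by
    intro j
    rw [Matrix.mul_add]; simp [hSC j]
  obtain ⟨i₀, hi₀, huniq⟩ := hE
  have hErows : ∀ i, i ≠ i₀ → E i = 0 := fun i hi => by
    by_contra h; exact hi (huniq i h)
  have hSE : ∀ j, (S * E) (Fin.last m) j = S (Fin.last m) i₀ * E i₀ j := by
    intro j
    rw [Matrix.mul_apply]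
    rw [Finset.sum_eq_single i₀]
    · intro i _ hi; rw [hErows i hi]; simp
    · intro h; exact absurd (Finset.mem_univ i₀) h
  constructor
  · intro h j; rw [← key j]; exact h j
  · intro hzero
    obtain ⟨j, hj⟩ : ∃ j, E i₀ j ≠ 0 := by
      by_contra h
      push_neg at h
      exact hi₀ (funext h)
    have : (S * (C + E)) (Fin.last m) j = 0 := congrFun hzero j
    rw [key j, hSE j] at this
    have hSne : S (Fin.last m) i₀ ≠ 0 := hS ▸ vand_inv_last_row_ne_zero x hx i₀
    exact (mul_ne_zero hSne hj) this
end
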